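/- For labeled transition systems I₁, I₂, the DMTS modal refinement χ(I₁) ≤ χ(I₂) holds if and only if I₁ and I₂ are bisimilar. In particular, ≤ restricted to the image of χ is symmetric. -/

import Mathlib

/-- A labeled transition system over a finite alphabet `A`:
finitely many states, an initial state, and labeled transitions. -/
structure LTS (A : Type) [Fintype A] where
  St : Type
  fin : Fintype St
  init : St
  tr : St → A → St → Prop

/-- A disjunctive modal transition system over a finite alphabet `A`. -/
structure DMTS (A : Type) [Fintype A] where
  St : Type
  fin : Fintype St
  init : Set St
  may : St → A → St → Prop
  must : St → Set (A × St) → Prop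
  consistent : ∀ s N, must s N → ∀ a t, (a, t) ∈ N → may s a t

variable {A : Type} [Fintype A]

/-- `R` is a modal refinement of `D₁` into `D₂`. -/
def IsModalRefinement (D₁ D₂ : DMTS A) (R : D₁.St → D₂.St → Prop) : Prop :=
  (∀ s₁ ∈ D₁.init, ∃ s₂ ∈ D₂.init, R s₁ s₂) ∧
  ∀ s₁ s₂, R s₁ s₂ →
    (∀ a t₁, D₁.may s₁ a t₁ → ∃ t₂, D₂.may s₂ a t₂ ∧ R t₁ t₂) ∧
    (∀ N₂, D₂.must s₂ N₂ → ∃ N₁, D₁.must s₁ N₁ ∧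
      ∀ a t₁, (a, t₁) ∈ N₁ → ∃ t₂, (a, t₂) ∈ N₂ ∧ R t₁ t₂)

/-- Modal refinement `D₁ ≤ D₂`. -/
def dmtsLe (D₁ D₂ : DMTS A) : Prop := ∃ R, IsModalRefinement D₁ D₂ R

/-- The standard embedding of LTS into DMTS. -/
def chi (I : LTS A) : DMTS A where
  St := I.St
  fin := I.fin
  init := {I.init}
  may := I.tr
  must := fun s N => ∃ a t, I.tr s a t ∧ N = {(a, t)}
  consistent := by
    rintro s N ⟨a, t, htr, rfl⟩ a' t' ht'
    simp only [Set.mem_singleton_iff, Prod.mk.injEq] at ht'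
    obtain ⟨rfl, rfl⟩ := ht'
    exact htr

/-- `R` is a bisimulation between the LTS `I₁` and `I₂`. -/
def IsBisimulation (I₁ I₂ : LTS A) (R : I₁.St → I₂.St → Prop) : Prop :=
  R I₁.init I₂.init ∧
  ∀ s₁ s₂, R s₁ s₂ →
    (∀ a t₁, I₁.tr s₁ a t₁ → ∃ t₂, I₂.tr s₂ a t₂ ∧ R t₁ t₂) ∧
    (∀ a t₂, I₂.tr s₂ a t₂ → ∃ t₁, I₁.tr s₁ a t₁ ∧ R t₁ t₂)

/-- `I₁` and `I₂` are bisimilar. -/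
def Bisimilar (I₁ I₂ : LTS A) : Prop := ∃ R, IsBisimulation I₁ I₂ R

/-- `R` is a simulation of LTS `I₁` into `I₂`. -/
def IsSimulation (I₁ I₂ : LTS A) (R : I₁.St → I₂.St → Prop) : Prop :=
  R I₁.init I₂.init ∧
  ∀ s₁ s₂, R s₁ s₂ → ∀ a t₁, I₁.tr s₁ a t₁ → ∃ t₂, I₂.tr s₂ a t₂ ∧ R t₁ t₂

/-- `(R₁, R₂)` is a simulation refinement of `D₁` into `D₂`. -/
def IsSimRefinement (D₁ D₂ : DMTS A) (R₁ R₂ : D₁.St → D₂.St → Prop) : Prop :=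
  (∀ s₁ ∈ D₁.init, ∃ s₂ ∈ D₂.init, R₁ s₁ s₂) ∧
  (∀ s₂ ∈ D₂.init, ∃ s₁ ∈ D₁.init, R₂ s₁ s₂) ∧
  (∀ s₁ s₂, R₁ s₁ s₂ → ∀ a t₁, D₁.may s₁ a t₁ → ∃ t₂, D₂.may s₂ a t₂ ∧ R₁ t₁ t₂) ∧
  (∀ s₁ s₂, R₂ s₁ s₂ → ∀ N₂, D₂.must s₂ N₂ → ∃ N₁, D₁.must s₁ N₁ ∧
    ∀ a t₁, (a, t₁) ∈ N₁ → ∃ t₂, (a, t₂) ∈ N₂ ∧ R₂ t₁ t₂)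

/-- Simulation refinement `D₁ ≲ D₂`. -/
def dmtsSimLe (D₁ D₂ : DMTS A) : Prop := ∃ R₁ R₂, IsSimRefinement D₁ D₂ R₁ R₂

/-- For LTS `I₁, I₂`, `χ(I₁) ≤ χ(I₂)` iff `I₁` and `I₂` are bisimilar; in particular,
modal refinement restricted to the image of `χ` is symmetric. -/
theorem chi_le_iff_bisimilar (I₁ I₂ : LTS A) :
    (dmtsLe (chi I₁) (chi I₂) ↔ Bisimilar I₁ I₂) ∧
    (dmtsLe (chi I₁) (chi I₂) → dmtsLe (chi I₂) (chi I₁)) := by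
  have key : ∀ J₁ J₂ : LTS A, dmtsLe (chi J₁) (chi J₂) ↔ Bisimilar J₁ J₂ := by
    intro J₁ J₂
    constructor
    · rintro ⟨R, hinit, hstep⟩
      obtain ⟨s₂, hs₂, hR⟩ := hinit J₁.init rfl
      refine ⟨R, by rwa [← hs₂], ?_⟩
      intro s₁ s₂ hR12
      obtain ⟨hmay, hmust⟩ := hstep s₁ s₂ hR12
      refine ⟨hmay, ?_⟩
      intro a t₂ htr
      obtain ⟨N₁, ⟨a', t₁, htr₁, rfl⟩, hmatch⟩ := hmust {(a, t₂)} ⟨a, t₂, htr, rfl⟩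
      obtain ⟨t₂', ht₂', hRt⟩ := hmatch a' t₁ rfl
      replace ht₂' := Prod.mk.inj (Set.mem_singleton_iff.mp ht₂')
      obtain ⟨rfl, rfl⟩ := ht₂'
      exact ⟨t₁, htr₁, hRt⟩
    · rintro ⟨R, hinit, hstep⟩
      refine ⟨R, ?_, ?_⟩
      · rintro s₁ rfl
        exact ⟨J₂.init, rfl, hinit⟩
      · intro s₁ s₂ hR12
        obtain ⟨hfwd, hbwd⟩ := hstep s₁ s₂ hR12
        refine ⟨hfwd, ?_⟩
        rintro N₂ ⟨a, t₂, htr₂, rfl⟩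
        obtain ⟨t₁, htr₁, hRt⟩ := hbwd a t₂ htr₂
        refine ⟨{(a, t₁)}, ⟨a, t₁, htr₁, rfl⟩, ?_⟩
        rintro a' t₁' ht'
        replace ht' := Prod.mk.inj (Set.mem_singleton_iff.mp ht')
        obtain ⟨rfl, rfl⟩ := ht'
        exact ⟨t₂, rfl, hRt⟩
  refine ⟨key I₁ I₂, ?_⟩
  intro h
  rw [key I₂ I₁]
  obtain ⟨R, hinit, hstep⟩ := (key I₁ I₂).mp h
  refine ⟨fun a b => R b a, hinit, ?_⟩
  intro s₂ s₁ hR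
  obtain ⟨h1, h2⟩ := hstep s₁ s₂ hR
  exact ⟨h2, h1⟩
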